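/- arXiv:1711.08779 — 2 statements merged into one kernel-verified Lean document; each statement's English description precedes it below -/
import Mathlib

section
/- For any small category C, the edgewise subdivision of the nerve of C is naturally isomorphic to the nerve of the twisted arrow category of C: Sd(N(C)) ≅ N(tw C). -/
open CategoryTheory Simplicial

def sdMap {m n : ℕ} (α : Fin (m + 1) →o Fin (n + 1)) :
    Fin (2 * m + 1 + 1) →o Fin (2 * n + 1 + 1) where
  toFun k :=
    if h : (k : ℕ) ≤ m then
      ⟨n - (α ⟨m - (k : ℕ), by omega⟩ : ℕ), by omega⟩
    else
      ⟨n + 1 + (α ⟨(k : ℕ) - m - 1, by have := k.isLt; omega⟩ : ℕ), by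
        have := (α ⟨(k : ℕ) - m - 1, by have := k.isLt; omega⟩).isLt; omega⟩
  monotone' := by
    intro a b hab
    have hab' : (a : ℕ) ≤ b := hab
    dsimp only
    split_ifs with ha hb hb
    · have h1 : (⟨m - (b : ℕ), by omega⟩ : Fin (m + 1)) ≤ ⟨m - (a : ℕ), by omega⟩ := by
        simp only [Fin.mk_le_mk]; omega
      have := α.monotone h1
      simp only [Fin.le_def] at this ⊢
      omega
    · have h1 := (α ⟨m - (a : ℕ), by omega⟩).isLt
      simp only [Fin.mk_le_mk]
      omega
    · omega
    · have h1 : (⟨(a : ℕ) - m - 1, by have := a.isLt; omega⟩ : Fin (m + 1)) ≤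
          ⟨(b : ℕ) - m - 1, by have := b.isLt; omega⟩ := by
        simp only [Fin.mk_le_mk]; omega
      have := α.monotone h1
      simp only [Fin.le_def] at this ⊢
      omega

lemma sdMap_of_le {m n : ℕ} (α : Fin (m + 1) →o Fin (n + 1)) (k : Fin (2 * m + 1 + 1))
    (h : (k : ℕ) ≤ m) :
    (sdMap α k : ℕ) = n - (α ⟨m - (k : ℕ), by omega⟩ : ℕ) := by
  exact congrArg Fin.val (dif_pos h)

lemma sdMap_of_gt {m n : ℕ} (α : Fin (m + 1) →o Fin (n + 1)) (k : Fin (2 * m + 1 + 1))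
    (h : ¬ (k : ℕ) ≤ m) :
    (sdMap α k : ℕ) = n + 1 + (α ⟨(k : ℕ) - m - 1, by have := k.isLt; omega⟩ : ℕ) := by
  exact congrArg Fin.val (dif_neg h)

lemma sdMap_id {m : ℕ} : sdMap (OrderHom.id : Fin (m+1) →o Fin (m+1)) = OrderHom.id := by
  ext k
  have hk := k.isLt
  by_cases h : (k : ℕ) ≤ m
  · rw [sdMap_of_le _ k h]; simp; omega
  · rw [sdMap_of_gt _ k h]; simp; omega

lemma sdMap_comp {m n p : ℕ} (f : Fin (m+1) →o Fin (n+1)) (g : Fin (n+1) →o Fin (p+1)) :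
    sdMap (g.comp f) = (sdMap g).comp (sdMap f) := by
  ext k
  have hk := k.isLt
  simp only [OrderHom.comp_coe, Function.comp_apply]
  by_cases h : (k : ℕ) ≤ m
  · rw [sdMap_of_le _ k h]
    have h2 : ((sdMap f k : Fin (2 * n + 1 + 1)) : ℕ) ≤ n := by
      rw [sdMap_of_le _ k h]; omega
    rw [sdMap_of_le _ _ h2]
    have h3 := (f ⟨m - (k : ℕ), by omega⟩).isLt
    simp only [OrderHom.comp_coe, Function.comp_apply]
    have harg : f ⟨m - (k : ℕ), by omega⟩ =
        ⟨n - ((sdMap f k : Fin (2 * n + 1 + 1)) : ℕ), by omega⟩ := by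
      apply Fin.ext
      simp only [Fin.val_mk]
      rw [sdMap_of_le _ k h]
      omega
    rw [harg]
  · rw [sdMap_of_gt _ k h]
    have h2 : ¬ ((sdMap f k : Fin (2 * n + 1 + 1)) : ℕ) ≤ n := by
      rw [sdMap_of_gt _ k h]; omega
    rw [sdMap_of_gt _ _ h2]
    simp only [OrderHom.comp_coe, Function.comp_apply]
    have h3 := k.isLt
    have harg : f ⟨(k : ℕ) - m - 1, by omega⟩ =
        ⟨((sdMap f k : Fin (2 * n + 1 + 1)) : ℕ) - n - 1, by omega⟩ := by
      apply Fin.ext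
      simp only [Fin.val_mk]
      rw [sdMap_of_gt _ k h]
      omega
    rw [harg]

/-- The edgewise subdivision functor `μ : Δ → Δ`, `[n] ↦ [n]ᵒᵖ ∗ [n] = [2n+1]`. -/
def sdFunctor : SimplexCategory ⥤ SimplexCategory where
  obj x := SimplexCategory.mk (2 * x.len + 1)
  map {x y} α := SimplexCategory.Hom.mk (sdMap α.toOrderHom)
  map_id := by
    intro x
    apply SimplexCategory.Hom.ext'
    simp only [SimplexCategory.Hom.toOrderHom_mk, SimplexCategory.id_toOrderHom, sdMap_id]
  map_comp := by
    intro x y z f g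
    apply SimplexCategory.Hom.ext'
    simp only [SimplexCategory.Hom.toOrderHom_mk, SimplexCategory.comp_toOrderHom, sdMap_comp]

open CategoryTheory

/-- Edgewise subdivision as an endofunctor of simplicial sets. -/
def Sd : SSet.{u} ⥤ SSet.{u} :=
  (Functor.whiskeringLeft _ _ _).obj sdFunctor.op

/-- The twisted arrow category of a category `C`: objects are morphisms of `C`. -/
structure Tw (C : Type u) [Category.{v} C] where
  {left : C}
  {right : C}
  hom : left ⟶ right

namespace Tw

variable {C : Type u} [Category.{v} C]

/-- A morphism `(c → d) ⟶ (c' → d')` in the twisted arrow category is a pair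
`c' → c`, `d → d'` making the evident square commute. -/
@[ext]
structure Hom (f g : Tw C) where
  mleft : g.left ⟶ f.left
  mright : f.right ⟶ g.right
  w : mleft ≫ f.hom ≫ mright = g.hom := by aesop_cat

attribute [simp] Hom.w

instance : Category.{v} (Tw C) where
  Hom := Tw.Hom
  id f := { mleft := 𝟙 _, mright := 𝟙 _ }
  comp {f g h} u v :=
    { mleft := v.mleft ≫ u.mleft
      mright := u.mright ≫ v.mright
      w := by
        rw [← v.w, ← u.w]
        simp only [Category.assoc] }
  id_comp := by intro f g u; apply Hom.ext <;> simp
  comp_id := by intro f g u; apply Hom.ext <;> simp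
  assoc := by intro f g h i u v w; apply Hom.ext <;> simp

end Tw

section Aux

open CategoryTheory

/-- Transport `F.map` along equalities of endpoints in a `Fin` preorder category. -/
lemma map_fin_congr {D : Type*} [Category D] {N : ℕ} (F : Fin (N + 1) ⥤ D)
    {a b a' b' : Fin (N + 1)} (ha : a = a') (hb : b = b') (f : a ⟶ b) (f' : a' ⟶ b') :
    F.map f = eqToHom (congrArg F.obj ha) ≫ F.map f' ≫ eqToHom (congrArg F.obj hb).symm := by
  subst ha hb
  rw [Subsingleton.elim f f']
  simp

lemma map'_congr {D : Type*} [Category D] {n : ℕ} (F : CategoryTheory.ComposableArrows D n)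
    {i j i' j' : ℕ} (hi : i = i') (hj : j = j') (hi'j' : i' ≤ j') (hj'n : j' ≤ n) :
    F.map' i j (by omega) (by omega) =
      eqToHom (congrArg F.obj (Fin.ext hi)) ≫ F.map' i' j' hi'j' hj'n ≫
        eqToHom (congrArg F.obj (Fin.ext hj)).symm := by
  subst hi hj
  simp

variable {C : Type u} [Category.{u} C]

lemma eqToHom_sandwich {A B X Y Z W : C} (p1 : A = B) (p2 : B = X) (f : X ⟶ Y) (p3 : Y = Z)
    (p4 : Z = W) (q1 : A = X) (q2 : Y = W) :
    eqToHom p1 ≫ (eqToHom p2 ≫ f ≫ eqToHom p3) ≫ eqToHom p4 = eqToHom q1 ≫ f ≫ eqToHom q2 := by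
  subst p1 p2 p3 p4; simp

lemma eqToHom_sandwich2 {A X Y Z W : C} (p1 : A = X) (f : X ⟶ Y) (p2 : Y = Z)
    (p3 : Z = W) (q1 : A = X) (q2 : Y = W) :
    (eqToHom p1 ≫ f ≫ eqToHom p2) ≫ eqToHom p3 = eqToHom q1 ≫ f ≫ eqToHom q2 := by
  subst p1 p2 p3; simp

lemma eqToHom_sandwich2' {A X Y W : C} (p1 : A = X) (f : X ⟶ Y) (p2 : Y = W)
    (q1 : A = X) (q2 : Y = W) :
    (eqToHom p1 ≫ f ≫ eqToHom p2) ≫ 𝟙 W = eqToHom q1 ≫ f ≫ eqToHom q2 := by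
  subst p1 p2; simp

lemma eqToHom_sandwich3 {A X1 Y1 Z1 B Y2 Z2 Y3 W : C} (p1 : A = X1) (f1 : X1 ⟶ Y1)
    (p2 : Y1 = Z1) (p3 : Z1 = B) (p4 : B = Y1) (g : Y1 ⟶ Y2) (p5 : Y2 = Z2) (p6 : Z2 = Y2)
    (h : Y2 ⟶ Y3) (p7 : Y3 = W) (k : X1 ⟶ Y3) (hk : f1 ≫ g ≫ h = k) (q1 : A = X1)
    (q2 : Y3 = W) :
    ((eqToHom p1 ≫ f1 ≫ eqToHom p2) ≫ eqToHom p3) ≫ (eqToHom p4 ≫ g ≫ eqToHom p5) ≫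
      (eqToHom p6 ≫ h ≫ eqToHom p7) ≫ 𝟙 W = eqToHom q1 ≫ k ≫ eqToHom q2 := by
  subst p1 p2 p3 p5 p7 hk; simp

namespace Tw

@[simp]
lemma comp_mleft {x y z : Tw C} (u : x ⟶ y) (v : y ⟶ z) :
    (u ≫ v).mleft = v.mleft ≫ u.mleft := rfl

@[simp]
lemma comp_mright {x y z : Tw C} (u : x ⟶ y) (v : y ⟶ z) :
    (u ≫ v).mright = u.mright ≫ v.mright := rfl

@[simp]
lemma id_mleft (x : Tw C) : Tw.Hom.mleft (𝟙 x) = 𝟙 x.left := rfl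

@[simp]
lemma id_mright (x : Tw C) : Tw.Hom.mright (𝟙 x) = 𝟙 x.right := rfl

@[simp]
lemma eqToHom_mleft {x y : Tw C} (h : x = y) :
    (eqToHom h).mleft = eqToHom (congrArg Tw.left h).symm := by subst h; rfl

@[simp]
lemma eqToHom_mright {x y : Tw C} (h : x = y) :
    (eqToHom h).mright = eqToHom (congrArg Tw.right h) := by subst h; rfl

lemma mk_eq {X Y X' Y' : C} (f : X ⟶ Y) (f' : X' ⟶ Y') (hX : X = X') (hY : Y = Y')
    (hf : f = eqToHom hX ≫ f' ≫ eqToHom hY.symm) : Tw.mk f = Tw.mk f' := by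
  subst hX hY
  simp only [eqToHom_refl, Category.comp_id, Category.id_comp] at hf
  subst hf
  rfl

lemma mk_hom_eq (t : Tw C) {X Y : C} (hX : X = t.left) (hY : Y = t.right) :
    Tw.mk (eqToHom hX ≫ t.hom ≫ eqToHom hY.symm) = t := by
  obtain ⟨f⟩ := t
  dsimp at hX hY
  subst hX hY
  simp only [eqToHom_refl, Category.comp_id, Category.id_comp]

end Tw

variable {m : ℕ}

/-- The forward map: a `(2m+1)`-simplex of the nerve of `C` gives an `m`-simplex of the
nerve of `Tw C`. -/
def fwd (F : ComposableArrows C (2 * m + 1)) : ComposableArrows (Tw C) m where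
  obj i := Tw.mk (F.map (homOfLE
      (show (⟨m - (i : ℕ), by omega⟩ : Fin (2 * m + 1 + 1)) ≤ ⟨m + 1 + (i : ℕ), by omega⟩ by
        simp only [Fin.mk_le_mk]; omega)))
  map {i j} g :=
    { mleft := F.map (homOfLE
        (show (⟨m - (j : ℕ), by omega⟩ : Fin (2 * m + 1 + 1)) ≤ ⟨m - (i : ℕ), by omega⟩ by
          simp only [Fin.mk_le_mk]
          have : (i : ℕ) ≤ (j : ℕ) := leOfHom g
          omega))
      mright := F.map (homOfLE
        (show (⟨m + 1 + (i : ℕ), by omega⟩ : Fin (2 * m + 1 + 1)) ≤ ⟨m + 1 + (j : ℕ), by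
            omega⟩ by
          simp only [Fin.mk_le_mk]
          have : (i : ℕ) ≤ (j : ℕ) := leOfHom g
          omega))
      w := by
        rw [← F.map_comp, ← F.map_comp]
        exact congrArg F.map (Subsingleton.elim _ _) }
  map_id i := by
    apply Tw.Hom.ext
    · exact F.map_id _
    · exact F.map_id _
  map_comp {i j k} g h := by
    apply Tw.Hom.ext
    · dsimp
      rw [← F.map_comp]
      exact congrArg F.map (Subsingleton.elim _ _)
    · dsimp
      rw [← F.map_comp]
      exact congrArg F.map (Subsingleton.elim _ _)

lemma fwd_obj_left (F : ComposableArrows C (2 * m + 1)) (i : Fin (m + 1)) :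
    ((fwd F).obj i).left = F.obj ⟨m - (i : ℕ), by omega⟩ := rfl

lemma fwd_obj_right (F : ComposableArrows C (2 * m + 1)) (i : Fin (m + 1)) :
    ((fwd F).obj i).right = F.obj ⟨m + 1 + (i : ℕ), by have := i.isLt; omega⟩ := rfl

/-- Object part of the inverse map. -/
def bobj (G : ComposableArrows (Tw C) m) (k : Fin (2 * m + 1 + 1)) : C :=
  if h : (k : ℕ) ≤ m then (G.obj ⟨m - (k : ℕ), by omega⟩).left
  else (G.obj ⟨(k : ℕ) - m - 1, by have := k.isLt; omega⟩).right

lemma bobj_eq_left (G : ComposableArrows (Tw C) m) (k : Fin (2 * m + 1 + 1)) (j : Fin (m + 1))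
    (h : (k : ℕ) + (j : ℕ) = m) : bobj G k = (G.obj j).left := by
  have e : (⟨m - (k : ℕ), by omega⟩ : Fin (m + 1)) = j :=
    Fin.ext (show m - (k : ℕ) = (j : ℕ) by omega)
  rw [bobj, dif_pos (by omega), e]

lemma bobj_eq_right (G : ComposableArrows (Tw C) m) (k : Fin (2 * m + 1 + 1)) (j : Fin (m + 1))
    (h : (k : ℕ) = m + 1 + (j : ℕ)) : bobj G k = (G.obj j).right := by
  have e : (⟨(k : ℕ) - m - 1, by have := k.isLt; omega⟩ : Fin (m + 1)) = j :=
    Fin.ext (show (k : ℕ) - m - 1 = (j : ℕ) by omega)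
  rw [bobj, dif_neg (by omega), e]

/-- branch `i < m` of the successive maps. -/
def bmapLt (G : ComposableArrows (Tw C) m) (i : Fin (2 * m + 1)) (h1 : (i : ℕ) < m) :
    bobj G i.castSucc ⟶ bobj G i.succ :=
  eqToHom (bobj_eq_left G _ ⟨m - (i : ℕ), by omega⟩ (by simp; omega)) ≫
    (G.map (homOfLE (show (⟨m - (i : ℕ) - 1, by omega⟩ : Fin (m + 1)) ≤ ⟨m - (i : ℕ), by
        omega⟩ by simp only [Fin.mk_le_mk]; omega))).mleft ≫
    eqToHom (bobj_eq_left G _ ⟨m - (i : ℕ) - 1, by omega⟩ (by simp; omega)).symm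

/-- branch `i = m` of the successive maps. -/
def bmapEq (G : ComposableArrows (Tw C) m) (i : Fin (2 * m + 1)) (h2 : (i : ℕ) = m) :
    bobj G i.castSucc ⟶ bobj G i.succ :=
  eqToHom (bobj_eq_left G _ ⟨0, by omega⟩ (by simp; omega)) ≫
    (G.obj ⟨0, by omega⟩).hom ≫
    eqToHom (bobj_eq_right G _ ⟨0, by omega⟩ (by simp; omega)).symm

/-- branch `i > m` of the successive maps. -/
def bmapGt (G : ComposableArrows (Tw C) m) (i : Fin (2 * m + 1)) (h3 : m < (i : ℕ)) :
    bobj G i.castSucc ⟶ bobj G i.succ :=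
  eqToHom (bobj_eq_right G _ ⟨(i : ℕ) - m - 1, by have := i.isLt; omega⟩
      (by simp; omega)) ≫
    (G.map (homOfLE (show (⟨(i : ℕ) - m - 1, by have := i.isLt; omega⟩ : Fin (m + 1)) ≤
        ⟨(i : ℕ) - m, by have := i.isLt; omega⟩ by simp only [Fin.mk_le_mk]; omega))).mright ≫
    eqToHom (bobj_eq_right G _ ⟨(i : ℕ) - m, by have := i.isLt; omega⟩ (by simp; omega)).symm

/-- Successive maps for the inverse. -/
def bmapSucc (G : ComposableArrows (Tw C) m) (i : Fin (2 * m + 1)) :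
    bobj G i.castSucc ⟶ bobj G i.succ :=
  if h1 : (i : ℕ) < m then bmapLt G i h1
  else if h2 : (i : ℕ) = m then bmapEq G i h2
  else bmapGt G i (by omega)

lemma bmapSucc_lt (G : ComposableArrows (Tw C) m) (i : Fin (2 * m + 1)) (h1 : (i : ℕ) < m) :
    bmapSucc G i = bmapLt G i h1 := dif_pos h1

lemma bmapSucc_eq (G : ComposableArrows (Tw C) m) (i : Fin (2 * m + 1)) (h2 : (i : ℕ) = m) :
    bmapSucc G i = bmapEq G i h2 := by
  rw [bmapSucc, dif_neg (by omega), dif_pos h2]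

lemma bmapSucc_gt (G : ComposableArrows (Tw C) m) (i : Fin (2 * m + 1)) (h3 : m < (i : ℕ)) :
    bmapSucc G i = bmapGt G i h3 := by
  rw [bmapSucc, dif_neg (by omega), dif_neg (by omega)]

/-- The inverse map: an `m`-simplex of the nerve of `Tw C` gives a `(2m+1)`-simplex of the
nerve of `C`. -/
noncomputable def bwd (G : ComposableArrows (Tw C) m) : ComposableArrows C (2 * m + 1) :=
  ComposableArrows.mkOfObjOfMapSucc (bobj G) (bmapSucc G)

lemma bwd_obj (G : ComposableArrows (Tw C) m) (k : Fin (2 * m + 1 + 1)) :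
    (bwd G).obj k = bobj G k := rfl

lemma bwd_map_succ (G : ComposableArrows (Tw C) m) (i : ℕ) (hi : i < 2 * m + 1) :
    (bwd G).map' i (i + 1) = bmapSucc G ⟨i, hi⟩ :=
  ComposableArrows.mkOfObjOfMapSucc_map_succ _ _ i hi

set_option maxHeartbeats 1000000 in
lemma bwd_map_middle (G : ComposableArrows (Tw C) m) :
    ∀ (a : ℕ) (ha : a ≤ m),
      (bwd G).map' (m - a) (m + 1 + a) (by omega) (by omega) =
        eqToHom (bobj_eq_left G ⟨m - a, by omega⟩ ⟨a, by omega⟩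
            (show m - a + a = m by omega)) ≫
          (G.obj ⟨a, by omega⟩).hom ≫
          eqToHom (bobj_eq_right G ⟨m + 1 + a, by omega⟩ ⟨a, by omega⟩ rfl).symm := by
  intro a
  induction a with
  | zero =>
    intro _
    refine Eq.trans (bwd_map_succ G m (by omega)) ?_
    rw [bmapSucc_eq G _ rfl, bmapEq]
  | succ a ih =>
    intro ha
    have iha := ih (by omega)
    have h3 : (bwd G).map' (m - (a + 1)) (m + 1 + (a + 1)) (by omega) (by omega) =
        (bwd G).map' (m - (a + 1)) (m - a) (by omega) (by omega) ≫
          (bwd G).map' (m - a) (m + 1 + a) (by omega) (by omega) ≫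
          (bwd G).map' (m + 1 + a) (m + 1 + (a + 1)) (by omega) (by omega) := by
      rw [← ComposableArrows.map'_comp (bwd G) (m - a) (m + 1 + a) (m + 1 + (a + 1))
          (by omega) (by omega) (by omega),
        ← ComposableArrows.map'_comp (bwd G) (m - (a + 1)) (m - a) (m + 1 + (a + 1))
          (by omega) (by omega) (by omega)]
    rw [h3, iha]
    rw [map'_congr (bwd G) (show m - (a + 1) = m - a - 1 by omega)
      (show m - a = m - a - 1 + 1 by omega) (by omega) (by omega)]
    rw [map'_congr (bwd G) (rfl : m + 1 + a = m + 1 + a)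
      (show m + 1 + (a + 1) = m + 1 + a + 1 by omega) (by omega) (by omega)]
    rw [bwd_map_succ G (m - a - 1) (by omega), bwd_map_succ G (m + 1 + a) (by omega)]
    rw [bmapSucc_lt G _ (show ((⟨m - a - 1, by omega⟩ : Fin (2 * m + 1)) : ℕ) < m by
      simp only [Fin.val_mk]; omega)]
    rw [bmapSucc_gt G _ (show m < ((⟨m + 1 + a, by omega⟩ : Fin (2 * m + 1)) : ℕ) by
      simp only [Fin.val_mk]; omega)]
    rw [bmapLt, bmapGt]
    -- now rewrite the G.map's to canonical indices
    rw [map_fin_congr G (a := ⟨m - (m - a - 1) - 1, by omega⟩) (a' := ⟨a, by omega⟩)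
      (b := ⟨m - (m - a - 1), by omega⟩) (b' := ⟨a + 1, by omega⟩)
      (Fin.ext (show m - (m - a - 1) - 1 = a by omega))
      (Fin.ext (show m - (m - a - 1) = a + 1 by omega)) _
      (homOfLE (show (⟨a, by omega⟩ : Fin (m + 1)) ≤ ⟨a + 1, by omega⟩ by
        simp only [Fin.mk_le_mk]; omega))]
    rw [map_fin_congr G (a := ⟨m + 1 + a - m - 1, by omega⟩) (a' := ⟨a, by omega⟩)
      (b := ⟨m + 1 + a - m, by omega⟩) (b' := ⟨a + 1, by omega⟩)
      (Fin.ext (show m + 1 + a - m - 1 = a by omega))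
      (Fin.ext (show m + 1 + a - m = a + 1 by omega)) _
      (homOfLE (show (⟨a, by omega⟩ : Fin (m + 1)) ≤ ⟨a + 1, by omega⟩ by
        simp only [Fin.mk_le_mk]; omega))]
    simp only [Tw.comp_mleft, Tw.comp_mright, Tw.eqToHom_mleft, Tw.eqToHom_mright,
      Category.assoc, eqToHom_trans, eqToHom_trans_assoc, eqToHom_refl,
      Category.id_comp, Category.comp_id]
    exact eqToHom_sandwich3 _ _ _ _ _ _ _ _ _ _ _
      (G.map (homOfLE (show (⟨a, by omega⟩ : Fin (m + 1)) ≤ ⟨a + 1, by omega⟩ by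
        simp only [Fin.mk_le_mk]; omega))).w _ _

lemma fwd_map_mleft (F : ComposableArrows C (2 * m + 1)) {i j : Fin (m + 1)} (g : i ⟶ j) :
    ((fwd F).map g).mleft = F.map (homOfLE
      (show (⟨m - (j : ℕ), by omega⟩ : Fin (2 * m + 1 + 1)) ≤ ⟨m - (i : ℕ), by omega⟩ by
        simp only [Fin.mk_le_mk]; have := leOfHom g; omega)) := rfl

lemma fwd_map_mright (F : ComposableArrows C (2 * m + 1)) {i j : Fin (m + 1)} (g : i ⟶ j) :
    ((fwd F).map g).mright = F.map (homOfLE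
      (show (⟨m + 1 + (i : ℕ), by have := i.isLt; omega⟩ : Fin (2 * m + 1 + 1)) ≤
          ⟨m + 1 + (j : ℕ), by have := j.isLt; omega⟩ by
        simp only [Fin.mk_le_mk]; have := leOfHom g; omega)) := rfl

lemma fwd_obj_hom (F : ComposableArrows C (2 * m + 1)) (i : Fin (m + 1)) :
    ((fwd F).obj i).hom = F.map (homOfLE
      (show (⟨m - (i : ℕ), by omega⟩ : Fin (2 * m + 1 + 1)) ≤
          ⟨m + 1 + (i : ℕ), by have := i.isLt; omega⟩ by
        simp only [Fin.mk_le_mk]; omega)) := rfl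

lemma bwd_fwd (F : ComposableArrows C (2 * m + 1)) : bwd (fwd F) = F := by
  have hobj : ∀ k : Fin (2 * m + 1 + 1), (bwd (fwd F)).obj k = F.obj k := by
    intro k
    by_cases hk : (k : ℕ) ≤ m
    · rw [bwd_obj, bobj_eq_left (fwd F) k ⟨m - (k : ℕ), by omega⟩
        (show (k : ℕ) + (m - (k : ℕ)) = m by omega), fwd_obj_left]
      exact congrArg F.obj (Fin.ext (show m - (m - (k : ℕ)) = (k : ℕ) by omega))
    · rw [bwd_obj, bobj_eq_right (fwd F) k ⟨(k : ℕ) - m - 1, by have := k.isLt; omega⟩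
        (show (k : ℕ) = m + 1 + ((k : ℕ) - m - 1) by omega), fwd_obj_right]
      exact congrArg F.obj (Fin.ext (show m + 1 + ((k : ℕ) - m - 1) = (k : ℕ) by omega))
  refine ComposableArrows.ext hobj ?_
  intro i hi
  rw [bwd_map_succ (fwd F) i hi]
  rcases Nat.lt_trichotomy i m with him | him | him
  · rw [bmapSucc_lt (fwd F) _ him, bmapLt, fwd_map_mleft]
    rw [map_fin_congr F (a := ⟨m - (m - (i : ℕ)), by omega⟩) (a' := ⟨i, by omega⟩)
      (b := ⟨m - (m - (i : ℕ) - 1), by omega⟩) (b' := ⟨i + 1, by omega⟩)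
      (Fin.ext (show m - (m - (i : ℕ)) = i by omega))
      (Fin.ext (show m - (m - (i : ℕ) - 1) = i + 1 by omega)) _
      (homOfLE (show (⟨i, by omega⟩ : Fin (2 * m + 1 + 1)) ≤ ⟨i + 1, by omega⟩ by
        simp only [Fin.mk_le_mk]; omega))]
    simp only [ComposableArrows.map', Category.assoc, eqToHom_trans, eqToHom_trans_assoc]
    exact eqToHom_sandwich _ _ _ _ _ _ _
  · subst him
    rw [bmapSucc_eq (fwd F) _ rfl, bmapEq, fwd_obj_hom]
    rfl
  · rw [bmapSucc_gt (fwd F) _ him, bmapGt, fwd_map_mright]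
    rw [map_fin_congr F (a := ⟨m + 1 + ((i : ℕ) - m - 1), by omega⟩) (a' := ⟨i, by omega⟩)
      (b := ⟨m + 1 + ((i : ℕ) - m), by omega⟩) (b' := ⟨i + 1, by omega⟩)
      (Fin.ext (show m + 1 + ((i : ℕ) - m - 1) = i by omega))
      (Fin.ext (show m + 1 + ((i : ℕ) - m) = i + 1 by omega)) _
      (homOfLE (show (⟨i, by omega⟩ : Fin (2 * m + 1 + 1)) ≤ ⟨i + 1, by omega⟩ by
        simp only [Fin.mk_le_mk]; omega))]
    simp only [ComposableArrows.map', Category.assoc, eqToHom_trans, eqToHom_trans_assoc]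
    exact eqToHom_sandwich _ _ _ _ _ _ _

lemma fwd_bwd (G : ComposableArrows (Tw C) m) : fwd (bwd G) = G := by
  have hobj : ∀ i : Fin (m + 1), (fwd (bwd G)).obj i = G.obj i := by
    intro i
    have h1 : (fwd (bwd G)).obj i =
        Tw.mk ((bwd G).map' (m - (i : ℕ)) (m + 1 + (i : ℕ)) (by omega)
          (by have := i.isLt; omega)) := rfl
    rw [h1, bwd_map_middle G (i : ℕ) (by have := i.isLt; omega)]
    refine Eq.trans (Tw.mk_hom_eq (G.obj ⟨(i : ℕ), by have := i.isLt; omega⟩)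
      (bobj_eq_left G ⟨m - (i : ℕ), by omega⟩ ⟨(i : ℕ), by have := i.isLt; omega⟩
        (show m - (i : ℕ) + (i : ℕ) = m by have := i.isLt; omega))
      (bobj_eq_right G ⟨m + 1 + (i : ℕ), by have := i.isLt; omega⟩
        ⟨(i : ℕ), by have := i.isLt; omega⟩ rfl)) ?_
    exact congrArg G.obj (Fin.ext rfl)
  refine ComposableArrows.ext hobj ?_
  intro i hi
  apply Tw.Hom.ext
  · have l1 : ((fwd (bwd G)).map' i (i + 1)).mleft =
        (bwd G).map' (m - (i + 1)) (m - i) (by omega) (by omega) := rfl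
    rw [l1, map'_congr (bwd G) (show m - (i + 1) = m - i - 1 by omega)
        (show m - i = m - i - 1 + 1 by omega) (by omega) (by omega),
      bwd_map_succ G (m - i - 1) (by omega),
      bmapSucc_lt G _ (show ((⟨m - i - 1, by omega⟩ : Fin (2 * m + 1)) : ℕ) < m by
        simp only [Fin.val_mk]; omega), bmapLt]
    rw [map_fin_congr G (a := ⟨m - (m - i - 1) - 1, by omega⟩) (a' := ⟨i, by omega⟩)
      (b := ⟨m - (m - i - 1), by omega⟩) (b' := ⟨i + 1, by omega⟩)
      (Fin.ext (show m - (m - i - 1) - 1 = i by omega))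
      (Fin.ext (show m - (m - i - 1) = i + 1 by omega)) _
      (homOfLE (show (⟨i, by omega⟩ : Fin (m + 1)) ≤ ⟨i + 1, by omega⟩ by
        simp only [Fin.mk_le_mk]; omega))]
    simp only [Tw.comp_mleft, Tw.eqToHom_mleft, ComposableArrows.map', Category.assoc,
      eqToHom_trans, eqToHom_trans_assoc, eqToHom_refl, Category.id_comp, Category.comp_id]
    exact eqToHom_sandwich2 _ _ _ _ _ _
  · have l1 : ((fwd (bwd G)).map' i (i + 1)).mright =
        (bwd G).map' (m + 1 + i) (m + 1 + (i + 1)) (by omega) (by omega) := rfl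
    rw [l1, map'_congr (bwd G) (rfl : m + 1 + i = m + 1 + i)
        (show m + 1 + (i + 1) = m + 1 + i + 1 by omega) (by omega) (by omega),
      bwd_map_succ G (m + 1 + i) (by omega),
      bmapSucc_gt G _ (show m < ((⟨m + 1 + i, by omega⟩ : Fin (2 * m + 1)) : ℕ) by
        simp only [Fin.val_mk]; omega), bmapGt]
    rw [map_fin_congr G (a := ⟨m + 1 + i - m - 1, by omega⟩) (a' := ⟨i, by omega⟩)
      (b := ⟨m + 1 + i - m, by omega⟩) (b' := ⟨i + 1, by omega⟩)
      (Fin.ext (show m + 1 + i - m - 1 = i by omega))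
      (Fin.ext (show m + 1 + i - m = i + 1 by omega)) _
      (homOfLE (show (⟨i, by omega⟩ : Fin (m + 1)) ≤ ⟨i + 1, by omega⟩ by
        simp only [Fin.mk_le_mk]; omega))]
    simp only [Tw.comp_mright, Tw.eqToHom_mright, ComposableArrows.map', Category.assoc,
      eqToHom_trans, eqToHom_trans_assoc, eqToHom_refl, Category.id_comp, Category.comp_id]
    exact eqToHom_sandwich2' _ _ _ _ _

lemma sdMap_mk_left {p q : ℕ} (α : Fin (p + 1) →o Fin (q + 1)) (i : Fin (p + 1)) :
    sdMap α ⟨p - (i : ℕ), by omega⟩ = ⟨q - (α i : ℕ), by have := (α i).isLt; omega⟩ := by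
  apply Fin.ext
  rw [sdMap_of_le α _ (show ((⟨p - (i : ℕ), by omega⟩ : Fin (2 * p + 1 + 1)) : ℕ) ≤ p by
    simp only [Fin.val_mk]; omega)]
  show q - (α ⟨p - (p - (i : ℕ)), by omega⟩ : ℕ) = q - (α i : ℕ)
  rw [show (⟨p - (p - (i : ℕ)), by omega⟩ : Fin (p + 1)) = i from
    Fin.ext (show p - (p - (i : ℕ)) = (i : ℕ) by have := i.isLt; omega)]

lemma sdMap_mk_right {p q : ℕ} (α : Fin (p + 1) →o Fin (q + 1)) (i : Fin (p + 1)) :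
    sdMap α ⟨p + 1 + (i : ℕ), by have := i.isLt; omega⟩ =
      ⟨q + 1 + (α i : ℕ), by have := (α i).isLt; omega⟩ := by
  apply Fin.ext
  rw [sdMap_of_gt α _ (show ¬ ((⟨p + 1 + (i : ℕ), by have := i.isLt; omega⟩ :
      Fin (2 * p + 1 + 1)) : ℕ) ≤ p by simp only [Fin.val_mk]; omega)]
  show q + 1 + (α ⟨p + 1 + (i : ℕ) - p - 1, by have := i.isLt; omega⟩ : ℕ) = _
  rw [show (⟨p + 1 + (i : ℕ) - p - 1, by have := i.isLt; omega⟩ : Fin (p + 1)) = i from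
    Fin.ext (show p + 1 + (i : ℕ) - p - 1 = (i : ℕ) by omega)]

lemma whisker_map {D : Type*} [Category D] {p q : ℕ} (F : ComposableArrows D p)
    (Φ : Fin (q + 1) ⥤ Fin (p + 1)) {a b : Fin (q + 1)} (g : a ⟶ b) :
    (F.whiskerLeft Φ).map g = F.map (Φ.map g) := rfl

set_option maxHeartbeats 2000000 in
lemma fwd_natural {x y : SimplexCategoryᵒᵖ} (f : x ⟶ y)
    (F : ComposableArrows C (2 * x.unop.len + 1)) :
    fwd (m := y.unop.len) ((Sd.obj (nerve C)).map f F) =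
      (nerve (Tw C)).map f (fwd (m := x.unop.len) F) := by
  show fwd ((F : ComposableArrows C (2 * x.unop.len + 1)).whiskerLeft
      (SimplexCategory.toCat.map (sdFunctor.map f.unop)).toFunctor) =
    (fwd F).whiskerLeft (SimplexCategory.toCat.map f.unop).toFunctor
  refine ComposableArrows.ext ?_ ?_
  · intro i
    exact Tw.mk_eq _ _ (congrArg F.obj (sdMap_mk_left f.unop.toOrderHom i))
      (congrArg F.obj (sdMap_mk_right f.unop.toOrderHom i))
      (map_fin_congr F (sdMap_mk_left f.unop.toOrderHom i)
        (sdMap_mk_right f.unop.toOrderHom i) _ _)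
  · intro i hi
    apply Tw.Hom.ext
    · simp only [Tw.comp_mleft, Tw.eqToHom_mleft, Category.assoc]
      rw [fwd_map_mleft]
      erw [Tw.eqToHom_mleft]
      exact map_fin_congr F (sdMap_mk_left f.unop.toOrderHom ⟨i + 1, by omega⟩)
        (sdMap_mk_left f.unop.toOrderHom ⟨i, by omega⟩) _ _
    · simp only [Tw.comp_mright, Tw.eqToHom_mright, Category.assoc]
      rw [fwd_map_mright]
      erw [Tw.eqToHom_mright]
      exact map_fin_congr F (sdMap_mk_right f.unop.toOrderHom ⟨i, by omega⟩)
        (sdMap_mk_right f.unop.toOrderHom ⟨i + 1, by omega⟩) _ _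

end Aux

/-- For any small category `C`, the edgewise subdivision of the nerve of `C` is
(naturally) isomorphic to the nerve of the twisted arrow category of `C`. -/
theorem sd_nerve_iso_nerve_tw (C : Type u) [Category.{u} C] :
    Nonempty (Sd.obj (nerve C) ≅ nerve (Tw C)) := by
  refine ⟨NatIso.ofComponents (fun X => Equiv.toIso ⟨fwd (m := X.unop.len), bwd, bwd_fwd, fwd_bwd⟩) ?_⟩
  intro X Y f
  ext F
  exact fwd_natural f F
end

section
/- Let C be an unpointed Waldhausen category with an initial object ∅ such that ∅ → X is a cofibration for every object X. If F : tw[n] → C is an object of cob(C)_n satisfying the additional condition that for each 0 ≤ i < n the canonical map F_{ii} ⊔ F_{i+1,i+1} → F_{i,i+1} is a cofibration, then for all 0 ≤ i ≤ j ≤ k ≤ n, the map F_{jk} → F_{ik} is a cofibration. -/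
open CategoryTheory Limits

/-- The twisted arrow poset `tw[n]` of `[n] = {0 < ⋯ < n}`: objects are pairs
`(i ≤ j)`, with `(i ≤ j) ⟶ (i' ≤ j')` exactly when `i' ≤ i` and `j ≤ j'`. -/
structure TwPoset (n : ℕ) where
  i : Fin (n + 1)
  j : Fin (n + 1)
  le : i ≤ j

instance (n : ℕ) : Preorder (TwPoset n) where
  le x y := y.i ≤ x.i ∧ x.j ≤ y.j
  le_refl x := ⟨le_refl _, le_refl _⟩
  le_trans x y z h h' := ⟨h'.1.trans h.1, h.2.trans h'.2⟩

/-- Let `C` be an unpointed Waldhausen category with an initial object `∅` such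
that `∅ → X` is always a cofibration.  If `F : tw[n] → C` is an object of
`cob(C)_n` such that moreover each canonical map `F_{ii} ⊔ F_{i+1,i+1} → F_{i,i+1}`
is a cofibration, then all the "backwards" maps `F_{jk} → F_{ik}` (`i ≤ j ≤ k`)
are cofibrations. -/
theorem backwards_maps_are_cofibrations
    {C : Type*} [Category C] (cof : MorphismProperty C)
    (hiso : ∀ {X Y : C} (f : X ⟶ Y), IsIso f → cof f)
    (hcomp : ∀ {X Y Z : C} (f : X ⟶ Y) (g : Y ⟶ Z), cof f → cof g → cof (f ≫ g))
    (hcobase : ∀ {A B X P : C} (f : A ⟶ B) (g : A ⟶ X) (h : B ⟶ P) (k : X ⟶ P),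
      cof f → IsPushout f g h k → cof k)
    [HasInitial C] [HasBinaryCoproducts C]
    (hinit : ∀ X : C, cof (initial.to X))
    {n : ℕ} (F : TwPoset n ⥤ C)
    -- `F` is an object of `cob(C)_n`:
    (hFcof : ∀ (i j k : Fin (n + 1)) (hij : i ≤ j) (hjk : j ≤ k),
      cof (F.map (homOfLE (show (⟨i, j, hij⟩ : TwPoset n) ≤ ⟨i, k, hij.trans hjk⟩ from
        ⟨le_refl _, hjk⟩))))
    (hFpo : ∀ (i j k l : Fin (n + 1)) (hij : i ≤ j) (hjk : j ≤ k) (hkl : k ≤ l),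
      IsPushout
        (F.map (homOfLE (show (⟨j, k, hjk⟩ : TwPoset n) ≤ ⟨j, l, hjk.trans hkl⟩ from
          ⟨le_refl _, hkl⟩)))
        (F.map (homOfLE (show (⟨j, k, hjk⟩ : TwPoset n) ≤ ⟨i, k, hij.trans hjk⟩ from
          ⟨hij, le_refl _⟩)))
        (F.map (homOfLE (show (⟨j, l, hjk.trans hkl⟩ : TwPoset n) ≤
          ⟨i, l, (hij.trans hjk).trans hkl⟩ from ⟨hij, le_refl _⟩)))
        (F.map (homOfLE (show (⟨i, k, hij.trans hjk⟩ : TwPoset n) ≤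
          ⟨i, l, (hij.trans hjk).trans hkl⟩ from ⟨le_refl _, hkl⟩))))
    -- the additional condition (iii):
    (hsum : ∀ (i i' : Fin (n + 1)) (hii' : i ≤ i'), (i' : ℕ) = (i : ℕ) + 1 →
      cof (coprod.desc
        (F.map (homOfLE (show (⟨i, i, le_refl i⟩ : TwPoset n) ≤ ⟨i, i', hii'⟩ from
          ⟨le_refl _, hii'⟩)))
        (F.map (homOfLE (show (⟨i', i', le_refl i'⟩ : TwPoset n) ≤ ⟨i, i', hii'⟩ from
          ⟨hii', le_refl _⟩))))) :
    ∀ (i j k : Fin (n + 1)) (hij : i ≤ j) (hjk : j ≤ k),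
      cof (F.map (homOfLE (show (⟨j, k, hjk⟩ : TwPoset n) ≤ ⟨i, k, hij.trans hjk⟩ from
        ⟨hij, le_refl _⟩))) := by

  -- Step 1: `F_{i'i'} → F_{ii'}` is a cofibration when `i' = i+1`.
  have step1 : ∀ (i i' : Fin (n + 1)) (hii' : i ≤ i'), (i' : ℕ) = (i : ℕ) + 1 →
      cof (F.map (homOfLE (show (⟨i', i', le_refl i'⟩ : TwPoset n) ≤ ⟨i, i', hii'⟩ from
        ⟨hii', le_refl _⟩))) := by
    intro i i' hii' hsucc
    have hpo := IsPushout.of_hasBinaryCoproduct'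
      (F.obj ⟨i, i, le_refl i⟩) (F.obj ⟨i', i', le_refl i'⟩)
    have hinr : cof (coprod.inr :
        F.obj ⟨i', i', le_refl i'⟩ ⟶ F.obj ⟨i, i, le_refl i⟩ ⨿ F.obj ⟨i', i', le_refl i'⟩) :=
      hcobase _ _ _ _ (hinit _) hpo
    have := hcomp _ _ hinr (hsum i i' hii' hsucc)
    rwa [coprod.inr_desc] at this
  -- Step 2: `F_{i'l} → F_{il}` is a cofibration when `i' = i+1`, `i' ≤ l`.
  have step2 : ∀ (i i' l : Fin (n + 1)) (hii' : i ≤ i') (hi'l : i' ≤ l),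
      (i' : ℕ) = (i : ℕ) + 1 →
      cof (F.map (homOfLE (show (⟨i', l, hi'l⟩ : TwPoset n) ≤
        ⟨i, l, hii'.trans hi'l⟩ from ⟨hii', le_refl _⟩))) := by
    intro i i' l hii' hi'l hsucc
    have hpo := (hFpo i i' i' l hii' (le_refl i') hi'l).flip
    exact hcobase _ _ _ _ (step1 i i' hii' hsucc) hpo
  -- Main induction on `j - i`.
  have main : ∀ (m : ℕ) (i j k : Fin (n + 1)) (hij : i ≤ j) (hjk : j ≤ k),
      (j : ℕ) - (i : ℕ) ≤ m →
      cof (F.map (homOfLE (show (⟨j, k, hjk⟩ : TwPoset n) ≤ ⟨i, k, hij.trans hjk⟩ from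
        ⟨hij, le_refl _⟩))) := by
    intro m
    induction m with
    | zero =>
      intro i j k hij hjk hm
      have hij' : (i : ℕ) = (j : ℕ) := le_antisymm hij (by omega)
      have : i = j := Fin.ext hij'
      subst this
      exact hiso _ (by
        have : (homOfLE (show (⟨i, k, hjk⟩ : TwPoset n) ≤ ⟨i, k, hij.trans hjk⟩ from
          ⟨hij, le_refl _⟩)) = 𝟙 _ := rfl
        rw [this, F.map_id]
        infer_instance)
    | succ m ih =>
      intro i j k hij hjk hm
      by_cases hij' : (i : ℕ) = (j : ℕ)
      · have : i = j := Fin.ext hij'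
        subst this
        exact hiso _ (by
          have : (homOfLE (show (⟨i, k, hjk⟩ : TwPoset n) ≤ ⟨i, k, hij.trans hjk⟩ from
            ⟨hij, le_refl _⟩)) = 𝟙 _ := rfl
          rw [this, F.map_id]
          infer_instance)
      · have hlt : (i : ℕ) < (j : ℕ) := lt_of_le_of_ne hij hij'
        have hj : (j : ℕ) ≤ n := by omega
        set i' : Fin (n + 1) := ⟨(i : ℕ) + 1, by omega⟩ with hi'def
        have hii' : i ≤ i' := by simp [hi'def, Fin.le_def]
        have hi'j : i' ≤ j := by simp [hi'def, Fin.le_def]; omega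
        have h1 : cof (F.map (homOfLE (show (⟨j, k, hjk⟩ : TwPoset n) ≤
            ⟨i', k, hi'j.trans hjk⟩ from ⟨hi'j, le_refl _⟩))) :=
          ih i' j k hi'j hjk (by simp [hi'def]; omega)
        have h2 : cof (F.map (homOfLE (show (⟨i', k, hi'j.trans hjk⟩ : TwPoset n) ≤
            ⟨i, k, hij.trans hjk⟩ from ⟨hii', le_refl _⟩))) :=
          step2 i i' k hii' (hi'j.trans hjk) (by simp [hi'def])
        have := hcomp _ _ h1 h2
        rwa [← F.map_comp] at this
  intro i j k hij hjk
  exact main ((j : ℕ) - (i : ℕ)) i j k hij hjk le_rfl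
end
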